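/- Let P := {(α,β,δ,l,f,τ) ∈ ℝ⁶ : α,β,l > 0, τ ≥ 0}, and for X ∈ P let G_X(λ) be the characteristic function G_X(λ) = 1 - β e^{-λτ}(1 - e^{-(λ+δ)l/f})/((λ+α)(λ+δ)). The set R₊ := {X ∈ P : ∃ λ with Re λ > 0 and G_X(λ) = 0} is open in P. -/

import Mathlib

open Complex

/-- Parameter space point: `X = (α, β, δ, l, f, τ)`. -/
abbrev Param : Type := ℝ × ℝ × ℝ × ℝ × ℝ × ℝ

/-- Characteristic function `G_X(λ)` of the delay system with parameters
`X = (α, β, δ, l, f, τ)`. -/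
noncomputable def charFun (X : Param) (lam : ℂ) : ℂ :=
  1 - (X.2.1 : ℂ) * Complex.exp (-lam * X.2.2.2.2.2) *
    (1 - Complex.exp (-(lam + X.2.2.1) * X.2.2.2.1 / X.2.2.2.2.1)) /
    ((lam + X.1) * (lam + X.2.2.1))

/-- Admissible parameter set `P`: `α, β, l > 0` and `τ ≥ 0`. -/
def paramSet : Set Param :=
  {X | 0 < X.1 ∧ 0 < X.2.1 ∧ 0 < X.2.2.2.1 ∧ 0 ≤ X.2.2.2.2.2}

open Metric Set

noncomputable def cfNum (X : Param) (z : ℂ) : ℂ :=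
  (X.2.1 : ℂ) * Complex.exp (-z * X.2.2.2.2.2) *
    (1 - Complex.exp (-(z + X.2.2.1) * X.2.2.2.1 / X.2.2.2.2.1))
noncomputable def cfDen (X : Param) (z : ℂ) : ℂ := (z + X.1) * (z + X.2.2.1)
lemma charFun_eq (X : Param) (z : ℂ) : charFun X z = 1 - cfNum X z / cfDen X z := rfl
lemma cfNum_differentiable (X : Param) : Differentiable ℂ (cfNum X) := by unfold cfNum; fun_prop
lemma cfDen_differentiable (X : Param) : Differentiable ℂ (cfDen X) := by unfold cfDen; fun_prop
lemma charFun_differentiableOn (X : Param) :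
    DifferentiableOn ℂ (charFun X) {z | cfDen X z ≠ 0} :=
  (differentiableOn_const 1).sub
    (((cfNum_differentiable X).differentiableOn).div
      ((cfDen_differentiable X).differentiableOn) (fun _ hz => hz))
lemma isOpen_den (X : Param) : IsOpen {z : ℂ | cfDen X z ≠ 0} :=
  isOpen_compl_singleton.preimage (cfDen_differentiable X).continuous
lemma contOn_H : ContinuousOn (fun p : Param × ℂ => charFun p.1 p.2)
    {p : Param × ℂ | p.1.2.2.2.2.1 ≠ 0 ∧ cfDen p.1 p.2 ≠ 0} := by
  unfold charFun cfDen
  apply ContinuousOn.sub continuousOn_const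
  apply ContinuousOn.div
  · apply ContinuousOn.mul
    · apply ContinuousOn.mul
      · fun_prop
      · apply Continuous.comp_continuousOn Complex.continuous_exp
        fun_prop
    · apply ContinuousOn.sub continuousOn_const
      apply Continuous.comp_continuousOn Complex.continuous_exp
      apply ContinuousOn.div (by fun_prop) (by fun_prop)
      intro p hp; simpa using hp.1
  · fun_prop
  · exact fun p hp => hp.2
lemma isOpen_W : IsOpen {p : Param × ℂ | p.1.2.2.2.2.1 ≠ 0 ∧ cfDen p.1 p.2 ≠ 0} := by
  apply IsOpen.inter
  · exact isOpen_compl_singleton.preimage (by fun_prop)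
  · exact isOpen_compl_singleton.preimage (show Continuous fun p : Param × ℂ => cfDen p.1 p.2 by
      unfold cfDen; fun_prop)
/-- `charFun X` cannot vanish identically near a point where the denominator is nonzero. -/
lemma not_eventually_zero (X : Param) {z₀ : ℂ} (hden : cfDen X z₀ ≠ 0)
    (h : ∀ᶠ z in nhds z₀, charFun X z = 0) : False := by
  have hden' : ∀ᶠ z in nhds z₀, cfDen X z ≠ 0 :=
    ((cfDen_differentiable X).continuous.continuousAt).eventually_ne hden
  have heq : cfNum X =ᶠ[nhds z₀] cfDen X := by
    filter_upwards [h, hden'] with z hz hdz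
    rw [charFun_eq] at hz
    have h1 : cfNum X z / cfDen X z = 1 := (sub_eq_zero.mp hz).symm
    exact (div_eq_one_iff_eq hdz).mp h1
  have hall : cfNum X = cfDen X :=
    AnalyticOnNhd.eq_of_eventuallyEq
      ((cfNum_differentiable X).differentiableOn.analyticOnNhd isOpen_univ)
      ((cfDen_differentiable X).differentiableOn.analyticOnNhd isOpen_univ) heq
  -- evaluate on the imaginary axis
  set β := X.2.1; set δ := X.2.2.1; set l := X.2.2.2.1; set f := X.2.2.2.2.1
  set C : ℝ := |β| * (1 + Real.exp (-(δ * l) / f)) with hC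
  have hC0 : 0 ≤ C := by positivity
  set t : ℝ := max 1 (C + 1) with ht
  have ht1 : (1:ℝ) ≤ t := le_max_left _ _
  have htC : C + 1 ≤ t := le_max_right _ _
  have hznum : ‖cfNum X (Complex.I * t)‖ ≤ C := by
    have h1 : ‖Complex.exp (-(Complex.I * t) * X.2.2.2.2.2)‖ = 1 := by
      rw [Complex.norm_exp]
      norm_num
    have harg : -(Complex.I * t + δ) * l / f =
        Complex.ofReal (-(δ * l) / f) + Complex.ofReal (-(t * l) / f) * Complex.I := by
      push_cast; ring
    have h2 : ‖Complex.exp (-(Complex.I * t + δ) * l / f)‖ = Real.exp (-(δ * l) / f) := by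
      rw [harg, Complex.norm_exp]
      simp
    calc ‖cfNum X (Complex.I * t)‖
        = |β| * ‖Complex.exp (-(Complex.I * t) * X.2.2.2.2.2)‖ *
            ‖(1 - Complex.exp (-(Complex.I * t + δ) * l / f))‖ := by
          simp [cfNum, norm_mul, Complex.norm_real]; rfl
      _ ≤ |β| * 1 * (1 + Real.exp (-(δ * l) / f)) := by
          rw [h1]
          gcongr
          calc ‖(1:ℂ) - Complex.exp (-(Complex.I * t + δ) * l / f)‖
              ≤ ‖(1:ℂ)‖ + ‖Complex.exp (-(Complex.I * t + δ) * l / f)‖ := norm_sub_le _ _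
            _ = 1 + Real.exp (-(δ * l) / f) := by rw [h2, norm_one]
      _ = C := by rw [hC]; ring
  have hzden : C < ‖cfDen X (Complex.I * t)‖ := by
    have h1 : t ≤ ‖Complex.I * t + X.1‖ := by
      have := Complex.abs_im_le_norm (Complex.I * t + X.1)
      simp only [Complex.add_im, Complex.mul_im, Complex.I_re, Complex.I_im,
        Complex.ofReal_re, Complex.ofReal_im] at this
      calc t = |t| := (abs_of_pos (by linarith)).symm
        _ ≤ _ := by simpa using this
    have h2 : t ≤ ‖Complex.I * t + δ‖ := by
      have := Complex.abs_im_le_norm (Complex.I * t + δ)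
      simp only [Complex.add_im, Complex.mul_im, Complex.I_re, Complex.I_im,
        Complex.ofReal_re, Complex.ofReal_im] at this
      calc t = |t| := (abs_of_pos (by linarith)).symm
        _ ≤ _ := by simpa using this
    calc C < C + 1 := by linarith
      _ ≤ t * 1 := by linarith
      _ ≤ t * t := by nlinarith
      _ ≤ ‖Complex.I * t + X.1‖ * ‖Complex.I * t + δ‖ := by
          apply mul_le_mul h1 h2 (by linarith) (norm_nonneg _)
      _ = ‖cfDen X (Complex.I * t)‖ := by rw [cfDen, norm_mul]
  rw [congrFun hall (Complex.I * t)] at hznum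
  linarith

theorem main_open : IsOpen {X : Param | ∃ lam : ℂ, 0 < lam.re ∧ charFun X lam = 0} := by
  rw [isOpen_iff_mem_nhds]
  rintro X₀ ⟨lam₀, hre, hroot⟩
  have hf0 : X₀.2.2.2.2.1 ≠ 0 := by
    intro h0
    have h1 : charFun X₀ lam₀ = 1 := by
      rw [charFun_eq]; simp [cfNum, h0]
    rw [hroot] at h1; exact one_ne_zero h1.symm
  have hden0 : cfDen X₀ lam₀ ≠ 0 := by
    intro h0
    have h1 : charFun X₀ lam₀ = 1 := by rw [charFun_eq, h0, div_zero, sub_zero]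
    rw [hroot] at h1; exact one_ne_zero h1.symm
  have hanal : AnalyticAt ℂ (charFun X₀) lam₀ :=
    (charFun_differentiableOn X₀).analyticAt ((isOpen_den X₀).mem_nhds hden0)
  rcases hanal.eventually_eq_zero_or_eventually_ne_zero with hcase | hcase
  · exact (not_eventually_zero X₀ hden0 hcase).elim
  -- choose a good radius r
  have hO : IsOpen {z : ℂ | 0 < z.re ∧ cfDen X₀ z ≠ 0} :=
    (isOpen_lt continuous_const Complex.continuous_re).inter (isOpen_den X₀)
  obtain ⟨r₁, hr₁, hball₁⟩ := Metric.isOpen_iff.mp hO lam₀ ⟨hre, hden0⟩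
  obtain ⟨r₂, hr₂, hball₂⟩ := Metric.mem_nhdsWithin_iff.mp hcase
  set r : ℝ := min r₁ r₂ / 2 with hrdef
  have hr : 0 < r := by positivity
  have hrr₁ : r < r₁ := by
    have := min_le_left r₁ r₂; simp only [hrdef]; linarith
  have hrr₂ : r < r₂ := by
    have := min_le_right r₁ r₂; simp only [hrdef]; linarith
  have hsub : closedBall lam₀ r ⊆ {z : ℂ | 0 < z.re ∧ cfDen X₀ z ≠ 0} :=
    (closedBall_subset_ball hrr₁).trans hball₁
  have hsphere_ne : ∀ z ∈ sphere lam₀ r, charFun X₀ z ≠ 0 := by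
    intro z hz
    apply hball₂
    rw [mem_sphere] at hz
    constructor
    · rw [mem_ball]; rw [hz]; exact hrr₂
    · simp only [mem_compl_iff, mem_singleton_iff]
      intro h; rw [h, dist_self] at hz; linarith
  -- minimum of ‖charFun X₀‖ on the sphere
  have hcontX₀ : ContinuousOn (charFun X₀) (closedBall lam₀ r) :=
    (charFun_differentiableOn X₀).continuousOn.mono (fun z hz => (hsub hz).2)
  obtain ⟨w, hw, hwmin⟩ := (isCompact_sphere lam₀ r).exists_isMinOn
    (NormedSpace.sphere_nonempty.mpr hr.le)
    (continuous_norm.comp_continuousOn (hcontX₀.mono sphere_subset_closedBall))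
  set m : ℝ := ‖charFun X₀ w‖ with hmdef
  have hm : 0 < m := norm_pos_iff.mpr (hsphere_ne w hw)
  have hmin : ∀ z ∈ sphere lam₀ r, m ≤ ‖charFun X₀ z‖ := fun z hz => hwmin hz
  -- tube lemma
  set W' : Set (Param × ℂ) :=
    {p : Param × ℂ | p.1.2.2.2.2.1 ≠ 0 ∧ cfDen p.1 p.2 ≠ 0} ∩
      {p : Param × ℂ | cfDen X₀ p.2 ≠ 0} with hW'def
  have hW'open : IsOpen W' :=
    isOpen_W.inter ((isOpen_den X₀).preimage continuous_snd)
  have hφ : ContinuousOn (fun p : Param × ℂ => ‖charFun p.1 p.2 - charFun X₀ p.2‖) W' := by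
    apply ContinuousOn.norm
    apply ContinuousOn.sub (contOn_H.mono inter_subset_left)
    exact (charFun_differentiableOn X₀).continuousOn.comp continuous_snd.continuousOn
      (fun p hp => hp.2)
  have hVopen : IsOpen (W' ∩
      (fun p : Param × ℂ => ‖charFun p.1 p.2 - charFun X₀ p.2‖) ⁻¹' Iio (m/8)) :=
    hφ.isOpen_inter_preimage hW'open isOpen_Iio
  have hsub2 : ({X₀} : Set Param) ×ˢ closedBall lam₀ r ⊆ W' ∩
      (fun p : Param × ℂ => ‖charFun p.1 p.2 - charFun X₀ p.2‖) ⁻¹' Iio (m/8) := by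
    rintro ⟨Y, z⟩ ⟨hY, hz⟩
    simp only [mem_singleton_iff] at hY
    subst hY
    refine ⟨⟨⟨hf0, (hsub hz).2⟩, (hsub hz).2⟩, ?_⟩
    simp only [mem_preimage, mem_Iio, sub_self, norm_zero]
    positivity
  obtain ⟨u, v, hu, hv, hX₀u, hcbv, huv⟩ := generalized_tube_lemma isCompact_singleton
    (isCompact_closedBall lam₀ r) hVopen hsub2
  apply Filter.mem_of_superset (hu.mem_nhds (hX₀u rfl))
  intro X hXu
  have hkey : ∀ z ∈ closedBall lam₀ r,
      cfDen X z ≠ 0 ∧ ‖charFun X z - charFun X₀ z‖ < m/8 := by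
    intro z hz
    have := huv (Set.mk_mem_prod (mem_singleton X ▸ hXu) (hcbv hz))
    exact ⟨this.1.1.2, this.2⟩
  -- charFun X is nice on the closed ball
  have hdiff : DifferentiableOn ℂ (charFun X) (closedBall lam₀ r) :=
    (charFun_differentiableOn X).mono (fun z hz => (hkey z hz).1)
  have hdc : DiffContOnCl ℂ (charFun X) (ball lam₀ r) := by
    apply DifferentiableOn.diffContOnCl
    rwa [closure_ball lam₀ hr.ne']
  have hcenter : ‖charFun X lam₀‖ < m/8 := by
    have := (hkey lam₀ (mem_closedBall_self hr.le)).2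
    rwa [hroot, sub_zero] at this
  have hsphereX : ∀ z ∈ sphere lam₀ r, m/2 ≤ ‖charFun X z - charFun X lam₀‖ := by
    intro z hz
    have h1 : m ≤ ‖charFun X₀ z‖ := hmin z hz
    have h2 : ‖charFun X z - charFun X₀ z‖ < m/8 :=
      (hkey z (sphere_subset_closedBall hz)).2
    have h3 : ‖charFun X₀ z‖ - ‖charFun X z‖ ≤ ‖charFun X z - charFun X₀ z‖ := by
      rw [norm_sub_rev]; exact norm_sub_norm_le _ _
    have h4 : ‖charFun X z‖ - ‖charFun X lam₀‖ ≤ ‖charFun X z - charFun X lam₀‖ :=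
      norm_sub_norm_le _ _
    linarith
  have hfreq : ∃ᶠ z in nhds lam₀, charFun X z ≠ charFun X lam₀ := by
    by_contra hcon
    rw [Filter.not_frequently] at hcon
    simp only [not_not] at hcon
    have hanX : AnalyticOnNhd ℂ (charFun X) (ball lam₀ r) :=
      (hdiff.mono ball_subset_closedBall).analyticOnNhd isOpen_ball
    have heqball : EqOn (charFun X) (fun _ => charFun X lam₀) (ball lam₀ r) :=
      hanX.eqOn_of_preconnected_of_eventuallyEq
        (analyticOnNhd_const) (convex_ball lam₀ r).isPreconnected
        (mem_ball_self hr) hcon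
    have heqcb : EqOn (charFun X) (fun _ => charFun X lam₀) (closedBall lam₀ r) := by
      have hcl : closedBall lam₀ r ⊆ closure (ball lam₀ r) := by
        rw [closure_ball lam₀ hr.ne']
      exact heqball.of_subset_closure hdiff.continuousOn continuousOn_const
        ball_subset_closedBall hcl
    have := hsphereX w hw
    rw [heqcb (sphere_subset_closedBall hw)] at this
    simp only [sub_self, norm_zero] at this
    linarith
  have himg := hdc.ball_subset_image_closedBall hr hsphereX hfreq
  have h0mem : (0:ℂ) ∈ ball (charFun X lam₀) (m/2/2) := by
    rw [mem_ball, dist_eq_norm, zero_sub, norm_neg]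
    linarith
  obtain ⟨z, hzcb, hz0⟩ := himg h0mem
  exact ⟨z, (hsub hzcb).1, hz0⟩

/-- the region `R₊` of parameters whose characteristic function
has a root with positive real part is (relatively) open in `P`. -/
theorem Rplus_isOpen :
    IsOpen (Subtype.val ⁻¹'
        {X : Param | ∃ lam : ℂ, 0 < lam.re ∧ charFun X lam = 0} :
      Set paramSet) :=
  main_open.preimage continuous_subtype_val
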